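/- arXiv:1401.1894 — 2 statements merged into one kernel-verified Lean document; each statement's English description precedes it below -/
import Mathlib

section
/- If S is guessable with fewer than α mind changes, witnessed by G and H, then for every ordinal β and every finite sequence σ ∈ S_β, we have H(σ) ≥ β. -/
open Filter Topology Classical

/-- The initial segment `f↾n` of an infinite sequence. -/
def res (f : ℕ → ℕ) (n : ℕ) : List ℕ := List.ofFn (fun i : Fin n => f i)

/-- `[X]`: the set of infinite sequences all of whose finite initial segments lie in `X`. -/
def seqsIn (X : Set (List ℕ)) : Set (ℕ → ℕ) := {f | ∀ n, res f n ∈ X}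

/-- The simplified remainder `S_α`. -/
noncomputable def SRem (S : Set (ℕ → ℕ)) (α : Ordinal.{0}) : Set (List ℕ) :=
  Ordinal.limitRecOn α Set.univ
    (fun _ prev => {x | x ∈ prev ∧ ∃ f g : ℕ → ℕ,
      f ∈ seqsIn prev ∧ g ∈ seqsIn prev ∧ res f x.length = x ∧ res g x.length = x ∧
      f ∈ S ∧ g ∉ S})
    (fun _ _ ih => ⋂ (β : Ordinal.{0}) (h : β < _), ih β h)

/-- Wadge's remainder `Rm_μ(A,B)`. -/
noncomputable def Rm (A B : Set (ℕ → ℕ)) (μ : Ordinal.{0}) : Set (ℕ → ℕ) :=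
  if μ = 0 then Set.univ
  else ⋂ (ν : {ν : Ordinal.{0} // ν < μ}),
    closure (Rm A B ν.1 ∩ A) ∩ closure (Rm A B ν.1 ∩ B)
termination_by μ
decreasing_by exact ν.2

/-- The least ordinal at which the simplified remainders stabilize. -/
noncomputable def alphaS (S : Set (ℕ → ℕ)) : Ordinal.{0} :=
  sInf {α | SRem S α = SRem S (α + 1)}

/-- `S_∞`, the stable value of the simplified remainders. -/
noncomputable def Sinf (S : Set (ℕ → ℕ)) : Set (List ℕ) := SRem S (alphaS S)

/-- `β(σ)`: the least ordinal `γ` with `σ ∉ S_γ`. -/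
noncomputable def betaOf (S : Set (ℕ → ℕ)) (σ : List ℕ) : Ordinal.{0} :=
  sInf {γ | σ ∉ SRem S γ}

/-- `G` guesses `S`. -/
def Guesses (G : List ℕ → Bool) (S : Set (ℕ → ℕ)) : Prop :=
  ∀ f : ℕ → ℕ, ∀ᶠ n in atTop, (G (res f n) = true ↔ f ∈ S)

def Guessable (S : Set (ℕ → ℕ)) : Prop := ∃ G, Guesses G S

/-- `G, H` witness that `S` is guessable with `< α` mind changes. -/
def WitnessMC (S : Set (ℕ → ℕ)) (α : Ordinal.{0}) (G : List ℕ → Bool)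
    (H : List ℕ → Ordinal.{0}) : Prop :=
  Guesses G S ∧ (∀ σ, H σ < α) ∧
  (∀ (f : ℕ → ℕ) (n : ℕ), H (res f (n + 1)) ≤ H (res f n)) ∧
  (∀ (f : ℕ → ℕ) (n : ℕ), G (res f (n + 1)) ≠ G (res f n) →
    H (res f (n + 1)) < H (res f n))

def GuessableMC (S : Set (ℕ → ℕ)) (α : Ordinal.{0}) : Prop := ∃ G H, WitnessMC S α G H

/-- An ordinal is even if it is of the form `λ + n` with `λ` limit or zero and `n` even. -/
def OrdEven (o : Ordinal.{0}) : Prop :=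
  ∃ (l : Ordinal.{0}) (n : ℕ), (l = 0 ∨ Order.IsSuccLimit l) ∧ o = l + n ∧ Even n

/-- The Hausdorff difference set `D_α((A_η)_{η<α})`. -/
def DSet (α : Ordinal.{0}) (A : Ordinal.{0} → Set (ℕ → ℕ)) : Set (ℕ → ℕ) :=
  {x | ∃ η, η < α ∧ x ∈ A η ∧ (∀ η', η' < η → x ∉ A η') ∧ (OrdEven η ↔ ¬ OrdEven α)}

/-- Membership in the class `D_α(Σ⁰₁)`. -/
def InDiff (α : Ordinal.{0}) (S : Set (ℕ → ℕ)) : Prop :=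
  ∃ A : Ordinal.{0} → Set (ℕ → ℕ), (∀ η, η < α → IsOpen (A η)) ∧
    (∀ η η', η ≤ η' → η' < α → A η ⊆ A η') ∧ S = DSet α A
/-- Wadge's `Rm_Ω(S)`: the stable value of `Rm_μ(S, Sᶜ)`. -/
noncomputable def RmInf (S : Set (ℕ → ℕ)) : Set (ℕ → ℕ) :=
  Rm S Sᶜ (sInf {μ : Ordinal.{0} | Rm S Sᶜ μ = Rm S Sᶜ (μ + 1)})

/-- The canonical guesser `G_S`. -/
noncomputable def GS (S : Set (ℕ → ℕ)) (σ : List ℕ) : Bool :=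
  if (∃ f : ℕ → ℕ, res f σ.length = σ ∧ f ∈ seqsIn (SRem S (betaOf S σ - 1))) then
    decide (∃ f : ℕ → ℕ, res f σ.length = σ ∧ f ∈ seqsIn (SRem S (betaOf S σ - 1)) ∧ f ∈ S)
  else if h : σ = [] then false
  else GS S σ.dropLast
termination_by σ.length
decreasing_by
  simp only [List.length_dropLast]
  exact Nat.sub_lt (List.length_pos_iff.mpr h) one_pos

/-- `S` is `F_σ`: a countable union of closed sets. -/
def IsFsigma (S : Set (ℕ → ℕ)) : Prop :=
  ∃ C : ℕ → Set (ℕ → ℕ), (∀ n, IsClosed (C n)) ∧ S = ⋃ n, C n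

/-- Boolean combinations of open sets. -/
inductive BoolComb : Set (ℕ → ℕ) → Prop
  | isOpen {s : Set (ℕ → ℕ)} : IsOpen s → BoolComb s
  | compl {s : Set (ℕ → ℕ)} : BoolComb s → BoolComb sᶜ
  | union {s t : Set (ℕ → ℕ)} : BoolComb s → BoolComb t → BoolComb (s ∪ t)

/-- The Borel class `Σ⁰_α` on Baire space (for `α ≥ 1`). -/
noncomputable def Sigma0 (α : Ordinal.{0}) : Set (Set (ℕ → ℕ)) :=
  if α = 1 then {s | IsOpen s}
  else {s | ∃ g : ℕ → Set (ℕ → ℕ), s = ⋃ n, g n ∧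
    ∀ n, ∃ β : {β : Ordinal.{0} // β < α}, 1 ≤ β.1 ∧ (g n)ᶜ ∈ Sigma0 β.1}
termination_by α
decreasing_by exact β.2

/-- The ambiguous Borel class `Δ⁰_α`. -/
noncomputable def Delta0 (α : Ordinal.{0}) : Set (Set (ℕ → ℕ)) :=
  {s | s ∈ Sigma0 α ∧ sᶜ ∈ Sigma0 α}

/-- The Boolean characteristic function. -/
noncomputable def chi (X : Set (ℕ → ℕ)) (f : ℕ → ℕ) : Bool := decide (f ∈ X)

/-- `G` guesses `S` based on the sequence of sets `Ss`. -/
def GuessesBased (G : List Bool → Bool) (Ss : ℕ → Set (ℕ → ℕ)) (S : Set (ℕ → ℕ)) : Prop :=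
  ∀ f : ℕ → ℕ, ∀ᶠ n in atTop,
    (G (List.ofFn (fun i : Fin n => chi (Ss i) f)) = true ↔ f ∈ S)

/-- `S` is `μ`th-order guessable. -/
def HigherGuessable (μ : Ordinal.{0}) (S : Set (ℕ → ℕ)) : Prop :=
  ∃ Ss : ℕ → Set (ℕ → ℕ), (∀ i, ∃ μi, μi < μ ∧ Ss i ∈ Delta0 (μi + 1)) ∧
    ∃ G : List Bool → Bool, GuessesBased G Ss S

lemma SRem_succ' (S : Set (ℕ → ℕ)) (β : Ordinal.{0}) :
    SRem S (β + 1) = {x | x ∈ SRem S β ∧ ∃ f g : ℕ → ℕ,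
      f ∈ seqsIn (SRem S β) ∧ g ∈ seqsIn (SRem S β) ∧ res f x.length = x ∧
      res g x.length = x ∧ f ∈ S ∧ g ∉ S} := by
  rw [SRem, Ordinal.add_one_eq_succ, Ordinal.limitRecOn_succ]
  rfl

lemma SRem_limit' (S : Set (ℕ → ℕ)) (β : Ordinal.{0}) (hl : Order.IsSuccLimit β) :
    SRem S β = ⋂ (δ : Ordinal.{0}) (_ : δ < β), SRem S δ := by
  rw [SRem, Ordinal.limitRecOn_limit _ _ _ _ hl]
  rfl

lemma SRem_anti (S : Set (ℕ → ℕ)) :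
    ∀ β γ : Ordinal.{0}, γ ≤ β → SRem S β ⊆ SRem S γ := by
  intro β
  induction β using Ordinal.induction with
  | h β ih =>
    intro γ hγ
    rcases eq_or_lt_of_le hγ with rfl | h
    · exact subset_rfl
    rcases Ordinal.zero_or_succ_or_isSuccLimit β with rfl | ⟨δ, rfl⟩ | hl
    · exact absurd h (not_lt_zero (a := γ))
    · have h1 : SRem S (Order.succ δ) ⊆ SRem S δ := by
        rw [← Ordinal.add_one_eq_succ, SRem_succ']
        exact fun x hx => hx.1
      exact h1.trans (ih δ (Order.lt_succ δ) γ (Order.lt_succ_iff.mp h))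
    · rw [SRem_limit' S β hl]
      exact Set.biInter_subset_of_mem h

theorem stmt7 (S : Set (ℕ → ℕ)) (α : Ordinal.{0}) (G : List ℕ → Bool)
    (H : List ℕ → Ordinal.{0}) (hW : WitnessMC S α G H) :
    ∀ (β : Ordinal.{0}) (σ : List ℕ), σ ∈ SRem S β → β ≤ H σ := by
  obtain ⟨hG, _, hmono, hmc⟩ := hW
  intro β
  induction β using Ordinal.induction with
  | h β ih =>
    intro σ hσ
    by_contra hcon
    push_neg at hcon
    have hγβ : H σ < β := hcon
    have hσ' : σ ∈ SRem S (H σ + 1) :=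
      SRem_anti S β (H σ + 1)
        (by rwa [Ordinal.add_one_eq_succ, Order.succ_le_iff]) hσ
    rw [SRem_succ'] at hσ'
    obtain ⟨hσγ, f, g, hf, hg, hfσ, hgσ, hfS, hgS⟩ := hσ'
    have key : ∀ (h : ℕ → ℕ), h ∈ seqsIn (SRem S (H σ)) → res h σ.length = σ →
        ∀ n, G (res h (σ.length + n)) = G σ ∧ H (res h (σ.length + n)) = H σ := by
      intro h hmem hres n
      induction n with
      | zero => simp [hres]
      | succ n ihn =>
        have hle : H (res h (σ.length + n + 1)) ≤ H (res h (σ.length + n)) :=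
          hmono h _
        have hge : H σ ≤ H (res h (σ.length + n + 1)) :=
          ih (H σ) hγβ _ (hmem _)
        have hH : H (res h (σ.length + (n + 1))) = H σ :=
          le_antisymm (ihn.2 ▸ hle) hge
        refine ⟨?_, hH⟩
        by_contra hne
        have hGne : G (res h (σ.length + n + 1)) ≠ G (res h (σ.length + n)) := by
          intro he
          exact hne (he.trans ihn.1)
        have := hmc h (σ.length + n) hGne
        rw [ihn.2] at this
        rw [show H (res h (σ.length + n + 1)) = H σ from hH] at this
        exact absurd this (lt_irrefl _)
    obtain ⟨Nf, hNf⟩ := Filter.eventually_atTop.mp (hG f)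
    obtain ⟨Ng, hNg⟩ := Filter.eventually_atTop.mp (hG g)
    have h1 : G σ = true := by
      have := (hNf (σ.length + Nf) (Nat.le_add_left _ _)).mpr hfS
      rw [(key f hf hfσ Nf).1] at this
      exact this
    have h2 : G σ = false := by
      have := hNg (σ.length + Ng) (Nat.le_add_left _ _)
      rw [(key g hg hgσ Ng).1] at this
      rcases Bool.eq_false_or_eq_true (G σ) with h | h
      · exact absurd (this.mp h) hgS
      · exact h
    rw [h1] at h2
    exact Bool.noConfusion h2
end

section
/- (Semi-characterization of the difference hierarchy) For every ordinal α > 0 and S ⊆ ℕ^ℕ: S is guessable with fewer than α+1 mind changes if and only if S ∈ D_α(Σ⁰₁) or S^c ∈ D_α(Σ⁰₁). -/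
open Filter Topology Classical

/-! ### Auxiliary lemmas -/

lemma res_eq_iff {f g : ℕ → ℕ} {n : ℕ} : res f n = res g n ↔ ∀ i < n, f i = g i := by
  constructor
  · intro h i hi
    have := List.ofFn_inj.1 h
    exact congrFun this ⟨i, hi⟩
  · intro h
    exact List.ofFn_inj.2 (funext fun i => h i i.2)

lemma res_eq_of_le {f g : ℕ → ℕ} {m n : ℕ} (hmn : m ≤ n) (h : res f n = res g n) :
    res f m = res g m :=
  res_eq_iff.2 fun i hi => res_eq_iff.1 h i (lt_of_lt_of_le hi hmn)

lemma res_zero (f : ℕ → ℕ) : res f 0 = [] := by simp [res]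

lemma res_length (f : ℕ → ℕ) (n : ℕ) : (res f n).length = n := by simp [res]

lemma res_ext (σ : List ℕ) : res (fun i => σ.getD i 0) σ.length = σ := by
  apply List.ext_getElem
  · simp [res]
  · intro i h1 h2
    simp only [res] at h1 ⊢
    rw [List.getElem_ofFn]
    simp [List.getD, List.getElem?_eq_getElem h2]

lemma isOpen_res (Q : Set (List ℕ)) (n : ℕ) : IsOpen {f : ℕ → ℕ | res f n ∈ Q} := by
  rw [isOpen_iff_mem_nhds]
  intro f hf
  refine Filter.mem_of_superset
    ((PiNat.isOpen_cylinder (fun _ : ℕ => ℕ) f n).mem_nhds (PiNat.self_mem_cylinder f n)) ?_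
  intro g hg
  have : res g n = res f n := res_eq_iff.2 fun i hi => hg i hi
  simpa only [Set.mem_setOf_eq, this] using hf

lemma exists_cylinder_subset {A : Set (ℕ → ℕ)} (hA : IsOpen A) {f : ℕ → ℕ} (hf : f ∈ A) :
    ∃ n, ∀ g, res g n = res f n → g ∈ A := by
  obtain ⟨v, ⟨y, n, rfl⟩, hfv, hvA⟩ :=
    (PiNat.isTopologicalBasis_cylinders (fun _ : ℕ => ℕ)).exists_subset_of_mem_open hf hA
  refine ⟨n, fun g hg => hvA ?_⟩
  intro i hi
  rw [res_eq_iff.1 hg i hi]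
  exact hfv i hi

lemma antitone_step {u : ℕ → Ordinal.{0}} (h : ∀ n, u (n + 1) ≤ u n) :
    ∀ m n, m ≤ n → u n ≤ u m := by
  intro m n hmn
  induction hmn with
  | refl => exact le_rfl
  | step h' ih => exact le_trans (h _) ih

lemma eventually_const {u : ℕ → Ordinal.{0}} (h : ∀ n, u (n + 1) ≤ u n) :
    ∃ N, (∀ n, N ≤ n → u n = u N) ∧ ∀ n, u N ≤ u n := by
  have hne : (Set.range u).Nonempty := ⟨u 0, Set.mem_range_self 0⟩
  obtain ⟨N, hN⟩ := csInf_mem hne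
  refine ⟨N, fun n hn => ?_, fun n => ?_⟩
  · exact le_antisymm (antitone_step h N n hn) (hN ▸ csInf_le' (Set.mem_range_self n))
  · exact hN ▸ csInf_le' (Set.mem_range_self n)

lemma exists_limit_decomp (o : Ordinal.{0}) :
    ∃ (l : Ordinal.{0}) (n : ℕ), (l = 0 ∨ Order.IsSuccLimit l) ∧ o = l + n := by
  obtain ⟨n, hn⟩ := Ordinal.lt_omega0.1 (Ordinal.mod_lt o Ordinal.omega0_ne_zero)
  refine ⟨Ordinal.omega0 * (o / Ordinal.omega0), n, ?_, ?_⟩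
  · rcases eq_or_ne (o / Ordinal.omega0) 0 with h | h
    · left; simp [h]
    · right
      exact Ordinal.isSuccLimit_mul_left Ordinal.isSuccLimit_omega0 (pos_iff_ne_zero.2 h)
  · rw [← hn, Ordinal.div_add_mod]

lemma limit_decomp_unique_le {l₁ l₂ : Ordinal.{0}} {n₁ n₂ : ℕ}
    (h₁ : l₁ = 0 ∨ Order.IsSuccLimit l₁) (h₂ : l₂ = 0 ∨ Order.IsSuccLimit l₂)
    (hle : l₁ ≤ l₂) (h : l₁ + (n₁ : Ordinal) = l₂ + n₂) : l₁ = l₂ := by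
  have hd : l₁ + (l₂ - l₁) = l₂ := Ordinal.add_sub_cancel_of_le hle
  have hdn : l₂ - l₁ ≤ (n₁ : Ordinal) := by
    have : l₁ + (l₂ - l₁) ≤ l₁ + n₁ := by
      rw [hd, h]; exact le_self_add
    exact (add_le_add_iff_left _).1 this
  obtain ⟨k, hk⟩ := Ordinal.lt_omega0.1 (lt_of_le_of_lt hdn (Ordinal.nat_lt_omega0 n₁))
  rcases k with _ | m
  · rw [hk] at hd; simpa using hd
  · exfalso
    have hsucc : l₂ = (l₁ + m) + 1 := by
      rw [← hd, hk]; push_cast; rw [add_assoc]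
    rcases h₂ with h₂ | h₂
    · rw [h₂] at hsucc
      exact (Ordinal.succ_ne_zero (l₁ + m)) (by rw [← Ordinal.add_one_eq_succ, ← hsucc])
    · have hlt : l₁ + (m : Ordinal) < l₂ := by
        rw [hsucc]; exact lt_of_lt_of_le (lt_add_one _) le_rfl
      have := h₂.succ_lt hlt
      rw [← Ordinal.add_one_eq_succ, ← hsucc] at this
      exact lt_irrefl _ this

lemma limit_decomp_unique {l₁ l₂ : Ordinal.{0}} {n₁ n₂ : ℕ}
    (h₁ : l₁ = 0 ∨ Order.IsSuccLimit l₁) (h₂ : l₂ = 0 ∨ Order.IsSuccLimit l₂)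
    (h : l₁ + (n₁ : Ordinal) = l₂ + n₂) : l₁ = l₂ ∧ n₁ = n₂ := by
  have hl : l₁ = l₂ := by
    rcases le_total l₁ l₂ with hle | hle
    · exact limit_decomp_unique_le h₁ h₂ hle h
    · exact (limit_decomp_unique_le h₂ h₁ hle h.symm).symm
  subst hl
  refine ⟨rfl, ?_⟩
  have := (add_right_inj l₁).1 h
  exact_mod_cast this

lemma ordEven_add_one (o : Ordinal.{0}) : OrdEven (o + 1) ↔ ¬ OrdEven o := by
  constructor
  · rintro ⟨l, n, hl, ho, hn⟩ ⟨l', n', hl', ho', hn'⟩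
    rcases n with _ | m
    · rcases hl with rfl | hlim
      · rw [Ordinal.add_one_eq_succ] at ho
        simp only [Nat.cast_zero, add_zero, zero_add] at ho
        exact (Ordinal.succ_ne_zero o) ho
      · rw [Nat.cast_zero, add_zero] at ho
        have : o < l := by rw [← ho]; exact lt_add_one o
        have := hlim.succ_lt this
        rw [← Ordinal.add_one_eq_succ, ← ho] at this
        exact lt_irrefl _ this
    · have hom : o = l + m := by
        have h' : o + 1 = (l + m) + 1 := by rw [ho]; push_cast; rw [add_assoc]
        rw [Ordinal.add_one_eq_succ, Ordinal.add_one_eq_succ] at h'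
        exact Order.succ_injective h'
      obtain ⟨he1, he2⟩ := limit_decomp_unique hl' hl (by rw [← ho', ← hom])
      rw [he2] at hn'
      exact (Nat.even_add_one.1 hn) hn'
  · intro hno
    obtain ⟨l, n, hl, ho⟩ := exists_limit_decomp o
    have hodd : ¬ Even n := fun he => hno ⟨l, n, hl, ho, he⟩
    refine ⟨l, n + 1, hl, ?_, Nat.even_add_one.2 hodd⟩
    rw [ho]; push_cast; rw [add_assoc]

lemma ord_le_of_lt_add_one {a b : Ordinal.{0}} (h : a < b + 1) : a ≤ b := by
  rwa [Ordinal.add_one_eq_succ, Order.lt_succ_iff] at h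

lemma ord_add_one_le_of_lt {a b : Ordinal.{0}} (h : a < b) : a + 1 ≤ b := by
  rwa [Ordinal.add_one_eq_succ, Order.succ_le_iff]

lemma guessableMC_compl {S : Set (ℕ → ℕ)} {β : Ordinal.{0}} (h : GuessableMC S β) :
    GuessableMC Sᶜ β := by
  obtain ⟨G, H, hG, h1, h2, h3⟩ := h
  refine ⟨fun σ => !G σ, H, ?_, h1, h2, ?_⟩
  · intro f
    filter_upwards [hG f] with n hn
    cases hGn : G (res f n) <;> simp_all
  · intro f n hne
    apply h3
    simpa using hne

lemma inDiff_guessableMC {S : Set (ℕ → ℕ)} {α : Ordinal.{0}} (h : InDiff α S) :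
    GuessableMC S (α + 1) := by
  classical
  obtain ⟨A, hAopen, hAmono, hS⟩ := h
  set A' : Ordinal.{0} → Set (ℕ → ℕ) := fun η => if η < α then A η else Set.univ with hA'
  have hA'univ : ∀ η, ¬ η < α → A' η = Set.univ := by intro η hη; simp only [hA', if_neg hη]
  have hA'eq : ∀ η, η < α → A' η = A η := by intro η hη; simp only [hA', if_pos hη]
  set D : List ℕ → Set Ordinal.{0} :=
    fun σ => {η | ∀ g : ℕ → ℕ, res g σ.length = σ → g ∈ A' η} with hD
  have hαD : ∀ σ, α ∈ D σ := by
    intro σ g _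
    rw [hA'univ α (lt_irrefl α)]
    exact Set.mem_univ g
  have hDne : ∀ σ, (D σ).Nonempty := fun σ => ⟨α, hαD σ⟩
  set Hf : List ℕ → Ordinal.{0} := fun σ => sInf (D σ) with hHf
  have hHle : ∀ σ, Hf σ ≤ α := fun σ => csInf_le' (hαD σ)
  have hHmem : ∀ σ, Hf σ ∈ D σ := fun σ => csInf_mem (hDne σ)
  set Gf : List ℕ → Bool :=
    fun σ => if Hf σ < α ∧ (OrdEven (Hf σ) ↔ ¬ OrdEven α) then true else false with hGf
  have hHmono : ∀ (f : ℕ → ℕ) (n : ℕ), Hf (res f (n + 1)) ≤ Hf (res f n) := by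
    intro f n
    apply csInf_le_csInf (OrderBot.bddBelow _) (hDne _)
    intro η hη g hg
    exact hη g (by
      rw [res_length] at hg ⊢
      exact res_eq_of_le (Nat.le_succ n) hg)
  refine ⟨Gf, Hf, ?_, ?_, hHmono, ?_⟩
  · -- Guesses
    intro f
    set E : Set Ordinal.{0} := {η | f ∈ A' η} with hE
    have hαE : α ∈ E := by
      show f ∈ A' α
      rw [hA'univ α (lt_irrefl α)]; exact Set.mem_univ f
    have hη₀mem : f ∈ A' (sInf E) := csInf_mem (⟨α, hαE⟩ : E.Nonempty)
    have hη₀le : sInf E ≤ α := csInf_le' hαE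
    have claim1 : ∀ n, sInf E ≤ Hf (res f n) := by
      intro n
      refine csInf_le' ?_
      show f ∈ A' (Hf (res f n))
      exact hHmem (res f n) f (by rw [res_length])
    by_cases hcase : sInf E < α
    · have hfA : f ∈ A (sInf E) := by rwa [hA'eq _ hcase] at hη₀mem
      obtain ⟨N, hN⟩ := exists_cylinder_subset (hAopen _ hcase) hfA
      have hHev : ∀ n, N ≤ n → Hf (res f n) = sInf E := by
        intro n hn
        refine le_antisymm (csInf_le' ?_) (claim1 n)
        intro g hg
        rw [res_length] at hg
        rw [hA'eq _ hcase]
        exact hN g (res_eq_of_le hn hg)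
      have hmin : ∀ η' < sInf E, f ∉ A η' := by
        intro η' hη' hmem
        have hm : η' ∈ E := by
          show f ∈ A' η'
          rw [hA'eq _ (lt_trans hη' hcase)]; exact hmem
        exact absurd (csInf_le' hm) (not_le.2 hη')
      have hiffS : f ∈ S ↔ (OrdEven (sInf E) ↔ ¬ OrdEven α) := by
        rw [hS]
        constructor
        · rintro ⟨η, hηα, hmem, hminη, hpar⟩
          have hm : η ∈ E := by
            show f ∈ A' η
            rw [hA'eq _ hηα]; exact hmem
          have h1 : sInf E ≤ η := csInf_le' hm
          have h2 : ¬ sInf E < η := fun hlt => hminη _ hlt hfA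
          have : η = sInf E := le_antisymm (not_lt.1 h2) h1
          rwa [this] at hpar
        · intro hpar
          exact ⟨sInf E, hcase, hfA, hmin, hpar⟩
      refine Filter.eventually_atTop.2 ⟨N, fun n hn => ?_⟩
      simp only [hGf, hHev n hn]
      by_cases hpar : OrdEven (sInf E) ↔ ¬ OrdEven α
      · rw [if_pos ⟨hcase, hpar⟩]
        simp [hiffS.2 hpar]
      · rw [if_neg (by tauto)]
        simp only [Bool.false_eq_true, false_iff]
        exact fun hfS => hpar (hiffS.1 hfS)
    · have hη₀α : sInf E = α := le_antisymm hη₀le (not_lt.1 hcase)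
      have hfnS : f ∉ S := by
        rw [hS]
        rintro ⟨η, hηα, hmem, -, -⟩
        have hm : η ∈ E := by
          show f ∈ A' η
          rw [hA'eq _ hηα]; exact hmem
        have := csInf_le' hm
        rw [hη₀α] at this
        exact absurd (lt_of_le_of_lt this hηα) (lt_irrefl α)
      refine Filter.eventually_atTop.2 ⟨0, fun n _ => ?_⟩
      have hHn : Hf (res f n) = α := le_antisymm (hHle _) (hη₀α ▸ claim1 n)
      simp only [hGf, hHn, lt_irrefl, false_and, if_false, Bool.false_eq_true, false_iff]
      exact hfnS
  · -- bound
    intro σ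
    exact lt_of_le_of_lt (hHle σ) (lt_add_one α)
  · -- mind changes
    intro f n hne
    rcases lt_or_eq_of_le (hHmono f n) with h | h
    · exact h
    · exfalso
      apply hne
      simp only [hGf]
      rw [h]

lemma guessableMC_inDiff {S : Set (ℕ → ℕ)} {α : Ordinal.{0}}
    (h : GuessableMC S (α + 1)) : InDiff α S ∨ InDiff α Sᶜ := by
  classical
  obtain ⟨G, H, hG, h1, h2, h3⟩ := h
  have hub : ∀ σ, H σ ≤ α := fun σ => ord_le_of_lt_add_one (h1 σ)
  set b : Bool := G [] with hbdef
  -- if H σ = α then the guess never changed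
  have stringfact : ∀ σ, H σ = α → G σ = b := by
    intro σ hσα
    set f : ℕ → ℕ := fun i => σ.getD i 0 with hf
    have hfσ : res f σ.length = σ := res_ext σ
    have anti : ∀ m n, m ≤ n → H (res f n) ≤ H (res f m) :=
      antitone_step (u := fun n => H (res f n)) (fun n => h2 f n)
    have hHα : ∀ k, k ≤ σ.length → H (res f k) = α := by
      intro k hk
      refine le_antisymm (hub _) ?_
      have := anti k σ.length hk
      rwa [hfσ, hσα] at this
    have hGconst : ∀ k, k ≤ σ.length → G (res f k) = G (res f 0) := by
      intro k
      induction k with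
      | zero => intro _; rfl
      | succ m ih =>
        intro hk
        have hm : m ≤ σ.length := le_trans (Nat.le_succ m) hk
        have heq : G (res f (m + 1)) = G (res f m) := by
          by_contra hne
          have := h3 f m hne
          rw [hHα (m + 1) hk, hHα m hm] at this
          exact lt_irrefl α this
        rw [heq]
        exact ih hm
    have := hGconst σ.length le_rfl
    rw [hfσ, res_zero] at this
    rw [this, hbdef]
  -- the target guess value at each rank
  set t : Ordinal.{0} → Bool :=
    fun η => if OrdEven η ↔ ¬ OrdEven α then !b else b with ht
  have ht_succ : ∀ η, t (η + 1) = !(t η) := by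
    intro η
    by_cases hp : OrdEven η ↔ ¬ OrdEven α
    · have hp' : ¬ (OrdEven (η + 1) ↔ ¬ OrdEven α) := by
        rw [ordEven_add_one]; tauto
      simp only [ht, if_pos hp, if_neg hp', Bool.not_not]
    · have hp' : OrdEven (η + 1) ↔ ¬ OrdEven α := by
        rw [ordEven_add_one]; tauto
      simp only [ht, if_pos hp', if_neg hp]
  have htα : t α = b := by
    simp only [ht, if_neg (iff_not_self)]
  -- the modified rank
  set ρ : List ℕ → Ordinal.{0} :=
    fun σ => if G σ = t (H σ) then H σ else H σ + 1 with hρ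
  have hGt : ∀ σ, G σ = t (ρ σ) := by
    intro σ
    by_cases hc : G σ = t (H σ)
    · simp only [hρ, if_pos hc]; exact hc
    · simp only [hρ, if_neg hc, ht_succ]
      revert hc; generalize G σ = x; generalize t (H σ) = y; cases x <;> cases y <;> decide
  have hHρ_le : ∀ σ, H σ ≤ ρ σ := by
    intro σ
    simp only [hρ]
    split_ifs
    · exact le_rfl
    · exact le_of_lt (lt_add_one _)
  have hρ_le_succ : ∀ σ, ρ σ ≤ H σ + 1 := by
    intro σ
    simp only [hρ]
    split_ifs
    · exact le_of_lt (lt_add_one _)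
    · exact le_rfl
  have hρ_bound : ∀ σ, ρ σ ≤ α := by
    intro σ
    rcases lt_or_eq_of_le (hub σ) with hlt | heq
    · simp only [hρ]
      split_ifs
      · exact le_of_lt hlt
      · exact ord_add_one_le_of_lt hlt
    · have hGb : G σ = t (H σ) := by
        rw [heq, htα]
        exact stringfact σ heq
      simp only [hρ, if_pos hGb]
      exact hub σ
  have hρ_step : ∀ (f : ℕ → ℕ) (n : ℕ), ρ (res f (n + 1)) ≤ ρ (res f n) := by
    intro f n
    by_cases hGc : G (res f (n + 1)) = G (res f n)
    · by_cases h1' : G (res f (n + 1)) = t (H (res f (n + 1)))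
      · have : ρ (res f (n + 1)) = H (res f (n + 1)) := by simp only [hρ, if_pos h1']
        rw [this]
        exact le_trans (h2 f n) (hHρ_le _)
      · have hρ' : ρ (res f (n + 1)) = H (res f (n + 1)) + 1 := by
          simp only [hρ, if_neg h1']
        rcases lt_or_eq_of_le (h2 f n) with hlt | heq
        · rw [hρ']
          exact le_trans (ord_add_one_le_of_lt hlt) (hHρ_le _)
        · have h1'' : ¬ (G (res f n) = t (H (res f n))) := by
            intro hcon
            apply h1'
            rw [hGc, heq]
            exact hcon
          have hρσ : ρ (res f n) = H (res f n) + 1 := by simp only [hρ, if_neg h1'']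
          rw [hρ', hρσ, heq]
    · have hlt := h3 f n hGc
      exact le_trans (hρ_le_succ _)
        (le_trans (ord_add_one_le_of_lt hlt) (hHρ_le _))
  -- the open sets
  set A : Ordinal.{0} → Set (ℕ → ℕ) := fun η => {f | ∃ n, ρ (res f n) ≤ η} with hA
  have hAopen : ∀ η, η < α → IsOpen (A η) := by
    intro η _
    have : A η = ⋃ n, {f : ℕ → ℕ | res f n ∈ {σ | ρ σ ≤ η}} := by
      ext f
      simp only [hA, Set.mem_setOf_eq, Set.mem_iUnion]
    rw [this]
    exact isOpen_iUnion fun n => isOpen_res _ n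
  have hAmono : ∀ η η', η ≤ η' → η' < α → A η ⊆ A η' := by
    rintro η η' hle _ f ⟨n, hn⟩
    exact ⟨n, le_trans hn hle⟩
  -- the limiting rank of each f
  have key : ∀ f : ℕ → ℕ, ∃ r : Ordinal.{0}, r ≤ α ∧ (∀ η, f ∈ A η ↔ r ≤ η) ∧
      (t r = true ↔ f ∈ S) := by
    intro f
    obtain ⟨N, hN, hmin⟩ := eventually_const (u := fun n => ρ (res f n)) (hρ_step f)
    refine ⟨ρ (res f N), hρ_bound _, ?_, ?_⟩
    · intro η
      constructor
      · rintro ⟨n, hn⟩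
        exact le_trans (hmin n) hn
      · intro hle
        exact ⟨N, hle⟩
    · obtain ⟨M, hM⟩ := Filter.eventually_atTop.1 (hG f)
      have hiff := hM (max N M) (le_max_right N M)
      rw [hGt (res f (max N M)), hN (max N M) (le_max_left N M)] at hiff
      exact hiff
  -- membership in the difference set
  have hDS : ∀ (f : ℕ → ℕ) (r : Ordinal.{0}), (∀ η, f ∈ A η ↔ r ≤ η) →
      (f ∈ DSet α A ↔ (r < α ∧ (OrdEven r ↔ ¬ OrdEven α))) := by
    intro f r hmem
    constructor
    · rintro ⟨η, hηα, hfη, hminη, hpar⟩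
      have hle1 : r ≤ η := (hmem η).1 hfη
      have hle2 : ¬ r < η := fun hlt => hminη r hlt ((hmem r).2 le_rfl)
      have : η = r := le_antisymm (not_lt.1 hle2) hle1
      subst this
      exact ⟨hηα, hpar⟩
    · rintro ⟨hrα, hpar⟩
      exact ⟨r, hrα, (hmem r).2 le_rfl,
        fun η' hη' hfη' => absurd ((hmem η').1 hfη') (not_le.2 hη'), hpar⟩
  have hne_of_par : ∀ r : Ordinal.{0}, r ≤ α → (OrdEven r ↔ ¬ OrdEven α) → r < α := by
    intro r hra hpar
    rcases lt_or_eq_of_le hra with hlt | heq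
    · exact hlt
    · exact absurd (heq ▸ hpar) iff_not_self
  cases hbval : b with
  | false =>
    left
    refine ⟨A, hAopen, hAmono, ?_⟩
    ext f
    obtain ⟨r, hra, hmem, hkey⟩ := key f
    rw [hDS f r hmem]
    by_cases hpar : OrdEven r ↔ ¬ OrdEven α
    · have htr : t r = true := by simp only [ht, if_pos hpar, hbval, Bool.not_false]
      have hfS : f ∈ S := hkey.1 htr
      simp [hfS, hpar, hne_of_par r hra hpar]
    · have htr : t r = false := by simp only [ht, if_neg hpar, hbval]
      have hfS : f ∉ S := by
        intro hfS
        rw [← hkey] at hfS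
        rw [htr] at hfS
        exact absurd hfS (by simp)
      simp [hfS, hpar]
  | true =>
    right
    refine ⟨A, hAopen, hAmono, ?_⟩
    ext f
    obtain ⟨r, hra, hmem, hkey⟩ := key f
    rw [hDS f r hmem]
    by_cases hpar : OrdEven r ↔ ¬ OrdEven α
    · have htr : t r = false := by simp only [ht, if_pos hpar, hbval, Bool.not_true]
      have hfS : f ∉ S := by
        intro hfS
        rw [← hkey] at hfS
        rw [htr] at hfS
        exact absurd hfS (by simp)
      simp only [Set.mem_compl_iff]
      simp [hfS, hpar, hne_of_par r hra hpar]
    · have htr : t r = true := by simp only [ht, if_neg hpar, hbval]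
      have hfS : f ∈ S := hkey.1 htr
      simp only [Set.mem_compl_iff]
      simp [hfS, hpar]

theorem stmt13 (S : Set (ℕ → ℕ)) (α : Ordinal.{0}) (hα : 0 < α) :
    GuessableMC S (α + 1) ↔ (InDiff α S ∨ InDiff α Sᶜ) := by
  constructor
  · exact guessableMC_inDiff
  · rintro (h | h)
    · exact inDiff_guessableMC h
    · have := guessableMC_compl (inDiff_guessableMC h)
      rwa [compl_compl] at this
end
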